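/- Let (τ, J) ∈ ℂ × (Fin N → ℂ) with τ ≠ 0 and J = τ • ψ(J). If 1/τ does not belong to the spectrum of the derivative D_Jψ, then there exist ε > 0 and a function h : ℂ → (Fin N → ℂ) which is analytic on the open ball B(τ, ε), satisfies h(τ) = J and h(z) = z • ψ(h(z)) for all z ∈ B(τ, ε), and such that for every pair (z, K) with |z − τ| < ε and ‖K − J‖ < ε, if K = z • ψ(K) then K = h(z). (In particular the curve 𝒞 is a smooth analytic curve near (τ, J), locally parametrized by the first coordinate z.) -/

import Mathlib

/-- The polynomial map `ψ : (Fin N → ℂ) → (Fin N → ℂ)` associated with a family `P`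
of multivariate polynomials: `ψ(J) j = P j` evaluated at `J`. -/
noncomputable def psiMap (N : ℕ) (P : Fin N → MvPolynomial (Fin N) ℂ) :
    (Fin N → ℂ) → (Fin N → ℂ) :=
  fun J j => MvPolynomial.eval J (P j)

theorem stmt8 (N : ℕ) (hN : 1 ≤ N) (P : Fin N → MvPolynomial (Fin N) ℂ)
    (τ : ℂ) (J : Fin N → ℂ) (hτ : τ ≠ 0) (hJ : J = τ • psiMap N P J)
    (hspec : (1 / τ) ∉ spectrum ℂ (fderiv ℂ (psiMap N P) J)) :
    ∃ ε > 0, ∃ h : ℂ → (Fin N → ℂ),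
      AnalyticOnNhd ℂ h (Metric.ball τ ε) ∧ h τ = J ∧
      (∀ z ∈ Metric.ball τ ε, h z = z • psiMap N P (h z)) ∧
      (∀ (z : ℂ) (K : Fin N → ℂ), dist z τ < ε → ‖K - J‖ < ε →
        K = z • psiMap N P K → K = h z) := by
  classical
  set ψ : (Fin N → ℂ) → (Fin N → ℂ) := psiMap N P with hψdef
  -- ψ is analytic everywhere
  have hψa : ∀ K : Fin N → ℂ, AnalyticAt ℂ ψ K := by
    intro K
    apply AnalyticAt.pi
    intro j
    exact (AnalyticOnNhd.eval_mvPolynomial (P j)) K (Set.mem_univ K)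
  set L : (Fin N → ℂ) →L[ℂ] (Fin N → ℂ) := fderiv ℂ ψ J with hLdef
  have hψd : HasFDerivAt ψ L J := (hψa J).differentiableAt.hasFDerivAt
  -- the map G
  set G : ℂ × (Fin N → ℂ) → ℂ × (Fin N → ℂ) :=
    fun p => (p.1, p.2 - p.1 • ψ p.2) with hGdef
  have hGa : ∀ p, AnalyticAt ℂ G p := by
    intro p
    exact analyticAt_fst.prod
      (analyticAt_snd.sub (analyticAt_fst.smul ((hψa p.2).comp analyticAt_snd)))
  -- invertibility of u = 1 - τ • L
  set u : (Fin N → ℂ) →L[ℂ] (Fin N → ℂ) := 1 - τ • L with hudef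
  have hu : IsUnit u := by
    have h1 : IsUnit ((algebraMap ℂ ((Fin N → ℂ) →L[ℂ] (Fin N → ℂ))) (1/τ) - L) :=
      spectrum.notMem_iff.1 hspec
    have h2 : IsUnit ((algebraMap ℂ ((Fin N → ℂ) →L[ℂ] (Fin N → ℂ))) τ) :=
      (isUnit_iff_ne_zero.2 hτ).map (algebraMap ℂ _)
    have h3 := h2.mul h1
    have heq : (algebraMap ℂ ((Fin N → ℂ) →L[ℂ] (Fin N → ℂ))) τ *
        ((algebraMap ℂ _) (1/τ) - L) = u := by
      rw [mul_sub, ← map_mul, mul_one_div_cancel hτ, map_one, hudef]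
      refine ContinuousLinearMap.ext fun K => funext fun j => ?_
      simp [Algebra.algebraMap_eq_smul_one, ContinuousLinearMap.mul_apply]
    rwa [heq] at h3
  set v : (Fin N → ℂ) →L[ℂ] (Fin N → ℂ) := ↑hu.unit⁻¹ with hvdef
  have hv1 : ∀ K, u (v K) = K := by
    intro K
    have : (u * v) K = (1 : (Fin N → ℂ) →L[ℂ] (Fin N → ℂ)) K := by
      rw [hvdef, hu.mul_val_inv]
    simpa using this
  have hv2 : ∀ K, v (u K) = K := by
    intro K
    have : (v * u) K = (1 : (Fin N → ℂ) →L[ℂ] (Fin N → ℂ)) K := by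
      rw [hvdef, hu.val_inv_mul]
    simpa using this
  -- the derivative of G at (τ, J) as a continuous linear equiv
  set Dlin : (ℂ × (Fin N → ℂ)) →L[ℂ] (ℂ × (Fin N → ℂ)) :=
    (ContinuousLinearMap.fst ℂ ℂ (Fin N → ℂ)).prod
      (u.comp (ContinuousLinearMap.snd ℂ ℂ (Fin N → ℂ)) -
        (ContinuousLinearMap.fst ℂ ℂ (Fin N → ℂ)).smulRight (ψ J)) with hDlin
  set Dinv : (ℂ × (Fin N → ℂ)) →L[ℂ] (ℂ × (Fin N → ℂ)) :=
    (ContinuousLinearMap.fst ℂ ℂ (Fin N → ℂ)).prod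
      (v.comp ((ContinuousLinearMap.snd ℂ ℂ (Fin N → ℂ)) +
        (ContinuousLinearMap.fst ℂ ℂ (Fin N → ℂ)).smulRight (ψ J))) with hDinv
  have hinv1 : ∀ x, Dinv (Dlin x) = x := by
    intro x
    simp only [hDlin, hDinv, ContinuousLinearMap.prod_apply, ContinuousLinearMap.comp_apply,
      ContinuousLinearMap.coe_fst', ContinuousLinearMap.coe_snd', ContinuousLinearMap.sub_apply,
      ContinuousLinearMap.add_apply, ContinuousLinearMap.smulRight_apply]
    rw [sub_add_cancel, hv2]
  have hinv2 : ∀ x, Dlin (Dinv x) = x := by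
    intro x
    simp only [hDlin, hDinv, ContinuousLinearMap.prod_apply, ContinuousLinearMap.comp_apply,
      ContinuousLinearMap.coe_fst', ContinuousLinearMap.coe_snd', ContinuousLinearMap.sub_apply,
      ContinuousLinearMap.add_apply, ContinuousLinearMap.smulRight_apply]
    rw [hv1, add_sub_cancel_right]
  set iE : (ℂ × (Fin N → ℂ)) ≃L[ℂ] (ℂ × (Fin N → ℂ)) :=
    ContinuousLinearEquiv.equivOfInverse Dlin Dinv hinv1 hinv2 with hiE
  have hiEcoe : (iE : (ℂ × (Fin N → ℂ)) →L[ℂ] (ℂ × (Fin N → ℂ))) = Dlin := rfl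
  -- G has derivative Dlin at (τ, J)
  have hG' : HasFDerivAt G (iE : (ℂ × (Fin N → ℂ)) →L[ℂ] (ℂ × (Fin N → ℂ))) (τ, J) := by
    rw [hiEcoe]
    have hfst : HasFDerivAt (fun p : ℂ × (Fin N → ℂ) => p.1)
        (ContinuousLinearMap.fst ℂ ℂ (Fin N → ℂ)) (τ, J) := hasFDerivAt_fst
    have hsnd : HasFDerivAt (fun p : ℂ × (Fin N → ℂ) => p.2)
        (ContinuousLinearMap.snd ℂ ℂ (Fin N → ℂ)) (τ, J) := hasFDerivAt_snd
    have hψc : HasFDerivAt (fun p : ℂ × (Fin N → ℂ) => ψ p.2)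
        (L.comp (ContinuousLinearMap.snd ℂ ℂ (Fin N → ℂ))) (τ, J) :=
      HasFDerivAt.comp (f := Prod.snd) (τ, J) hψd hasFDerivAt_snd
    have hsm := hfst.smul hψc
    have hG2 := hsnd.sub hsm
    have hGfull := hfst.prodMk hG2
    have heq : (ContinuousLinearMap.fst ℂ ℂ (Fin N → ℂ)).prod
        (ContinuousLinearMap.snd ℂ ℂ (Fin N → ℂ) -
          ((τ, J).1 • L.comp (ContinuousLinearMap.snd ℂ ℂ (Fin N → ℂ)) +
            (ContinuousLinearMap.fst ℂ ℂ (Fin N → ℂ)).smulRight (ψ (τ, J).2))) = Dlin := by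
      refine ContinuousLinearMap.ext fun x => Prod.ext ?_ ?_
      · simp [hDlin]
      · simp only [hDlin, ContinuousLinearMap.prod_apply, ContinuousLinearMap.comp_apply,
          ContinuousLinearMap.coe_fst', ContinuousLinearMap.coe_snd',
          ContinuousLinearMap.sub_apply, ContinuousLinearMap.add_apply,
          ContinuousLinearMap.smulRight_apply, ContinuousLinearMap.smul_apply,
          ContinuousLinearMap.one_apply, hudef]
        abel
    rw [← heq]
    exact hGfull
  have hstrict : HasStrictFDerivAt G
      (iE : (ℂ × (Fin N → ℂ)) →L[ℂ] (ℂ × (Fin N → ℂ))) (τ, J) := by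
    have h := (hGa (τ, J)).hasStrictFDerivAt
    rwa [hG'.fderiv] at h
  -- the local homeomorphism
  set f : OpenPartialHomeomorph (ℂ × (Fin N → ℂ)) (ℂ × (Fin N → ℂ)) :=
    hstrict.toOpenPartialHomeomorph G with hfdef
  have hfcoe : (f : ℂ × (Fin N → ℂ) → ℂ × (Fin N → ℂ)) = G :=
    hstrict.toOpenPartialHomeomorph_coe
  have hsource : (τ, J) ∈ f.source := hstrict.mem_toOpenPartialHomeomorph_source
  have hGτJ : G (τ, J) = (τ, (0 : Fin N → ℂ)) := by
    simp only [hGdef]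
    exact Prod.ext rfl (by rw [sub_eq_zero]; exact hJ)
  have hfτJ : f (τ, J) = (τ, (0 : Fin N → ℂ)) := by rw [hfcoe]; exact hGτJ
  have htarget : (τ, (0 : Fin N → ℂ)) ∈ f.target := by
    rw [← hfτJ]; exact f.map_source hsource
  -- power series of G at (τ, J) and of the inverse
  obtain ⟨p, hp⟩ := hGa (τ, J)
  have hpf : HasFPowerSeriesAt (⇑f) p (τ, J) := by rw [hfcoe]; exact hp
  have hp1 : p 1 = (continuousMultilinearCurryFin1 ℂ (ℂ × (Fin N → ℂ))
      (ℂ × (Fin N → ℂ))).symm iE := by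
    have hd1 := hp.hasFDerivAt
    have : (continuousMultilinearCurryFin1 ℂ (ℂ × (Fin N → ℂ)) (ℂ × (Fin N → ℂ))) (p 1)
        = (iE : (ℂ × (Fin N → ℂ)) →L[ℂ] (ℂ × (Fin N → ℂ))) := hd1.unique hG'
    rw [← this]
    simp
  have hsymm := f.hasFPowerSeriesAt_symm hsource hpf hp1
  rw [hfτJ] at hsymm
  have ganal : AnalyticAt ℂ f.symm (τ, (0 : Fin N → ℂ)) := hsymm.analyticAt
  -- choose the radius
  have hev : ∀ᶠ y in nhds (τ, (0 : Fin N → ℂ)),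
      AnalyticAt ℂ f.symm y ∧ y ∈ f.target :=
    ganal.eventually_analyticAt.and (f.open_target.mem_nhds htarget)
  obtain ⟨ε1, hε1, hball1⟩ := Metric.eventually_nhds_iff.1 hev
  obtain ⟨ε2, hε2, hball2⟩ := Metric.isOpen_iff.1 f.open_source (τ, J) hsource
  refine ⟨min ε1 ε2, lt_min hε1 hε2, fun z => (f.symm (z, 0)).2, ?_, ?_, ?_, ?_⟩
  · -- analyticity
    intro z hz
    have hz1 : dist (z, (0 : Fin N → ℂ)) (τ, (0 : Fin N → ℂ)) < ε1 := by
      rw [Prod.dist_eq]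
      simp only [dist_self]
      exact max_lt (lt_of_lt_of_le hz (min_le_left _ _)) hε1
    have hA := (hball1 hz1).1
    have h0 : AnalyticAt ℂ (fun w : ℂ => (w, (0 : Fin N → ℂ))) z :=
      analyticAt_id.prod analyticAt_const
    have h1 : AnalyticAt ℂ (⇑f.symm ∘ fun w : ℂ => (w, (0 : Fin N → ℂ))) z := AnalyticAt.comp (g := ⇑f.symm) (f := fun w : ℂ => (w, (0 : Fin N → ℂ))) (x := z) hA h0
    have h2 : AnalyticAt ℂ ((fun q : ℂ × (Fin N → ℂ) => q.2) ∘ ⇑f.symm ∘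
        fun w : ℂ => (w, (0 : Fin N → ℂ))) z := analyticAt_snd.comp h1
    exact h2
  · -- value at τ
    have : f.symm (τ, (0 : Fin N → ℂ)) = (τ, J) := by
      rw [← hfτJ]; exact f.left_inv hsource
    show (f.symm (τ, (0 : Fin N → ℂ))).2 = J
    rw [this]
  · -- the equation
    intro z hz
    have hz1 : dist (z, (0 : Fin N → ℂ)) (τ, (0 : Fin N → ℂ)) < ε1 := by
      rw [Prod.dist_eq]
      simp only [dist_self]
      have : dist z τ < ε1 := lt_of_lt_of_le hz (min_le_left _ _)
      exact max_lt this hε1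
    have htz : (z, (0 : Fin N → ℂ)) ∈ f.target := (hball1 hz1).2
    have hri : f (f.symm (z, 0)) = (z, (0 : Fin N → ℂ)) := f.right_inv htz
    rw [hfcoe] at hri
    have h1 : (f.symm (z, (0 : Fin N → ℂ))).1 = z := congrArg Prod.fst hri
    have h2 : (f.symm (z, (0 : Fin N → ℂ))).2 -
        (f.symm (z, (0 : Fin N → ℂ))).1 • ψ (f.symm (z, (0 : Fin N → ℂ))).2
        = 0 := congrArg Prod.snd hri
    rw [h1] at h2
    have := sub_eq_zero.1 h2
    exact this
  · -- uniqueness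
    intro z K hzd hKd hK
    have hz1 : dist (z, (0 : Fin N → ℂ)) (τ, (0 : Fin N → ℂ)) < ε1 := by
      rw [Prod.dist_eq]
      simp only [dist_self]
      exact max_lt (lt_of_lt_of_le hzd (min_le_left _ _)) hε1
    have htz : (z, (0 : Fin N → ℂ)) ∈ f.target := (hball1 hz1).2
    have hw : f.symm (z, (0 : Fin N → ℂ)) ∈ f.source := f.map_target htz
    have hzK : (z, K) ∈ f.source := by
      apply hball2
      rw [Metric.mem_ball, Prod.dist_eq]
      exact max_lt (lt_of_lt_of_le hzd (min_le_right _ _))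
        (by rw [dist_eq_norm]; exact lt_of_lt_of_le hKd (min_le_right _ _))
    have hfzK : f (z, K) = (z, (0 : Fin N → ℂ)) := by
      rw [hfcoe]
      exact Prod.ext rfl (by simp only [hGdef]; rw [sub_eq_zero]; exact hK)
    have hfw : f (f.symm (z, (0 : Fin N → ℂ))) = (z, (0 : Fin N → ℂ)) := f.right_inv htz
    have := f.injOn hzK hw (by rw [hfzK, hfw])
    exact congrArg Prod.snd this
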